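/- On the complex C = CFK^∞(10_161) in its split form, let ι be the involution with ι(x_6) = U^{-1}x_{-6} (and values on the other generators as specified), and let ι' be the map that agrees with ι on all generators except ι'(x_6) = U^{-1}x_{-6} + U^{-1}x_3. Then ι' is also a grading-preserving, skew-filtered chain map, and ι and ι' are chain homotopic: defining the F2[U,U^{-1}]-linear map G by G(x_1') = U^{-2}x_3 and G = 0 on all other generators, G is skew-filtered, raises the homological grading by 1, and satisfies ∂G + G∂ = ι + ι' (equivalently ι - ι', over F2). -/
import Mathlib


/- STATEMENT 14: on CFK^∞(10_161) in split form, with ι the involution (with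
ι(x₆) = U⁻¹x₋₆) and ι' the map agreeing with ι except
ι'(x₆) = U⁻¹x₋₆ + U⁻¹x₃, the map ι' is also a grading-preserving,
skew-filtered chain map, and the map G with G(x₁') = U⁻²x₃ and G = 0 on all
other generators is skew-filtered, raises the homological grading by 1, and
satisfies ∂G + G∂ = ι + ι'. -/

open LaurentPolynomial

noncomputable section

/-- F2[U, U⁻¹] -/
abbrev L2 : Type := LaurentPolynomial (ZMod 2)

/-- the variable U = T 1 -/
def UL : L2 := T 1

/-- the i-th free generator -/
def gen {n : ℕ} (i : Fin n) : Fin n → L2 := Pi.single i 1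

/-- the F2[U,U⁻¹]-linear map sending the i-th generator to `v i` -/
def mkL {n : ℕ} (v : Fin n → (Fin n → L2)) : (Fin n → L2) →ₗ[L2] (Fin n → L2) :=
  (Pi.basisFun L2 (Fin n)).constr ℕ v

/-- `x` is homogeneous of homological degree `r` -/
def HomogL {n : ℕ} (M : Fin n → ℤ) (r : ℤ) (x : Fin n → L2) : Prop :=
  x ∈ Submodule.span (ZMod 2)
    {v : Fin n → L2 | ∃ (i : Fin n) (k : ℤ), M i - 2 * k = r ∧ v = (T k : L2) • gen i}

/-- every term of `x` has planar coordinates coordinatewise ≤ `st`. -/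
def BelowL {n : ℕ} (P : Fin n → ℤ × ℤ) (st : ℤ × ℤ) (x : Fin n → L2) : Prop :=
  x ∈ Submodule.span (ZMod 2)
    {v : Fin n → L2 | ∃ (i : Fin n) (k : ℤ),
      (P i).1 - k ≤ st.1 ∧ (P i).2 - k ≤ st.2 ∧ v = (T k : L2) • gen i}

/- generators of CFK^∞(10_161) in split form:
   x₋₄ = 0, x₋₃ = 1, x₀ = 2, x₃ = 3, x₄ = 4, x₆ = 5, x₁' = 6, x₂' = 7,
   x₅' = 8, x₋₆ = 9, x₋₁' = 10, x₋₂' = 11, x₋₅' = 12 -/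

/-- the split-form differential -/
def d : (Fin 13 → L2) →ₗ[L2] (Fin 13 → L2) :=
  mkL ![gen 1, 0, UL ^ 2 • gen 1 + gen 3, 0, UL • gen 3,
        UL • gen 6 + gen 8, gen 7, 0, UL • gen 7,
        gen 10 + UL • gen 12, UL • gen 11, 0, gen 11]

/-- homological gradings -/
def M : Fin 13 → ℤ := ![6, 5, 2, 1, 0, 3, 4, 3, 2, 1, 0, 1, 2]

/-- planar bigradings -/
def P : Fin 13 → ℤ × ℤ :=
  ![(0, 3), (0, 2), (0, 0), (0, -2), (0, -3), (0, 1), (0, 2), (0, 1),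
    (0, 0), (0, -1), (0, -2), (0, -1), (0, 0)]

/-- the involution ι, with ι(x₆) = U⁻¹x₋₆ -/
def iota : (Fin 13 → L2) →ₗ[L2] (Fin 13 → L2) :=
  mkL ![(T (-3) : L2) • gen 4, (T (-2) : L2) • gen 3, gen 2,
        UL ^ 2 • gen 1, UL ^ 3 • gen 0,
        (T (-1) : L2) • gen 9,
        (T (-2) : L2) • gen 10, (T (-1) : L2) • gen 11, gen 12,
        UL • gen 5 + UL • gen 7, UL ^ 2 • gen 6, UL • gen 7, gen 8]

/-- the map ι', agreeing with ι except ι'(x₆) = U⁻¹x₋₆ + U⁻¹x₃ -/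
def iota' : (Fin 13 → L2) →ₗ[L2] (Fin 13 → L2) :=
  mkL ![(T (-3) : L2) • gen 4, (T (-2) : L2) • gen 3, gen 2,
        UL ^ 2 • gen 1, UL ^ 3 • gen 0,
        (T (-1) : L2) • gen 9 + (T (-1) : L2) • gen 3,
        (T (-2) : L2) • gen 10, (T (-1) : L2) • gen 11, gen 12,
        UL • gen 5 + UL • gen 7, UL ^ 2 • gen 6, UL • gen 7, gen 8]

/-- the homotopy G, with G(x₁') = U⁻²x₃ and G = 0 on the other generators -/
def G : (Fin 13 → L2) →ₗ[L2] (Fin 13 → L2) :=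
  mkL ![0, 0, 0, 0, 0, 0, (T (-2) : L2) • gen 3, 0, 0, 0, 0, 0, 0]


-- auxiliary lemmas

lemma mkL_gen {n : ℕ} (v : Fin n → (Fin n → L2)) (i : Fin n) :
    mkL v (gen i) = v i := by
  have h : gen i = Pi.basisFun L2 (Fin n) i := by simp [gen]
  rw [h, mkL, Module.Basis.constr_basis]

lemma add_self' {α : Type*} [AddCommGroup α] [Module (ZMod 2) α] (x : α) : x + x = 0 := by
  have h : (2 : ZMod 2) = 0 := rfl
  calc x + x = (2 : ZMod 2) • x := by rw [two_smul]
  _ = 0 := by rw [h, zero_smul]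

@[simp] lemma T_smul_T {n : ℕ} (a b : ℤ) (x : Fin n → L2) :
    (T a : L2) • ((T b : L2) • x) = (T (a + b) : L2) • x := by
  rw [smul_smul, ← T_add]

@[simp] lemma UL_smul {n : ℕ} (x : Fin n → L2) : UL • x = (T 1 : L2) • x := rfl

@[simp] lemma ULpow_smul {n : ℕ} (k : ℕ) (x : Fin n → L2) :
    (UL ^ k) • x = (T (k : ℤ) : L2) • x := by
  rw [UL, T_pow]; norm_num

@[simp] lemma T_zero_smul {n : ℕ} (x : Fin n → L2) : (T 0 : L2) • x = x := by
  rw [T_zero, one_smul]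

@[simp] lemma d_g0 : d (gen 0) = gen 1 := by rw [d, mkL_gen]; rfl
@[simp] lemma d_g1 : d (gen 1) = 0 := by rw [d, mkL_gen]; rfl
@[simp] lemma d_g2 : d (gen 2) = UL ^ 2 • gen 1 + gen 3 := by rw [d, mkL_gen]; rfl
@[simp] lemma d_g3 : d (gen 3) = 0 := by rw [d, mkL_gen]; rfl
@[simp] lemma d_g4 : d (gen 4) = UL • gen 3 := by rw [d, mkL_gen]; rfl
@[simp] lemma d_g5 : d (gen 5) = UL • gen 6 + gen 8 := by rw [d, mkL_gen]; rfl
@[simp] lemma d_g6 : d (gen 6) = gen 7 := by rw [d, mkL_gen]; rfl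
@[simp] lemma d_g7 : d (gen 7) = 0 := by rw [d, mkL_gen]; rfl
@[simp] lemma d_g8 : d (gen 8) = UL • gen 7 := by rw [d, mkL_gen]; rfl
@[simp] lemma d_g9 : d (gen 9) = gen 10 + UL • gen 12 := by rw [d, mkL_gen]; rfl
@[simp] lemma d_g10 : d (gen 10) = UL • gen 11 := by rw [d, mkL_gen]; rfl
@[simp] lemma d_g11 : d (gen 11) = 0 := by rw [d, mkL_gen]; rfl
@[simp] lemma d_g12 : d (gen 12) = gen 11 := by rw [d, mkL_gen]; rfl

@[simp] lemma i_g0 : iota (gen 0) = (T (-3) : L2) • gen 4 := by rw [iota, mkL_gen]; rfl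
@[simp] lemma i_g1 : iota (gen 1) = (T (-2) : L2) • gen 3 := by rw [iota, mkL_gen]; rfl
@[simp] lemma i_g2 : iota (gen 2) = gen 2 := by rw [iota, mkL_gen]; rfl
@[simp] lemma i_g3 : iota (gen 3) = UL ^ 2 • gen 1 := by rw [iota, mkL_gen]; rfl
@[simp] lemma i_g4 : iota (gen 4) = UL ^ 3 • gen 0 := by rw [iota, mkL_gen]; rfl
@[simp] lemma i_g5 : iota (gen 5) = (T (-1) : L2) • gen 9 := by rw [iota, mkL_gen]; rfl
@[simp] lemma i_g6 : iota (gen 6) = (T (-2) : L2) • gen 10 := by rw [iota, mkL_gen]; rfl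
@[simp] lemma i_g7 : iota (gen 7) = (T (-1) : L2) • gen 11 := by rw [iota, mkL_gen]; rfl
@[simp] lemma i_g8 : iota (gen 8) = gen 12 := by rw [iota, mkL_gen]; rfl
@[simp] lemma i_g9 : iota (gen 9) = UL • gen 5 + UL • gen 7 := by rw [iota, mkL_gen]; rfl
@[simp] lemma i_g10 : iota (gen 10) = UL ^ 2 • gen 6 := by rw [iota, mkL_gen]; rfl
@[simp] lemma i_g11 : iota (gen 11) = UL • gen 7 := by rw [iota, mkL_gen]; rfl
@[simp] lemma i_g12 : iota (gen 12) = gen 8 := by rw [iota, mkL_gen]; rfl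

@[simp] lemma i'_g0 : iota' (gen 0) = (T (-3) : L2) • gen 4 := by rw [iota', mkL_gen]; rfl
@[simp] lemma i'_g1 : iota' (gen 1) = (T (-2) : L2) • gen 3 := by rw [iota', mkL_gen]; rfl
@[simp] lemma i'_g2 : iota' (gen 2) = gen 2 := by rw [iota', mkL_gen]; rfl
@[simp] lemma i'_g3 : iota' (gen 3) = UL ^ 2 • gen 1 := by rw [iota', mkL_gen]; rfl
@[simp] lemma i'_g4 : iota' (gen 4) = UL ^ 3 • gen 0 := by rw [iota', mkL_gen]; rfl
@[simp] lemma i'_g5 : iota' (gen 5) = (T (-1) : L2) • gen 9 + (T (-1) : L2) • gen 3 := by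
  rw [iota', mkL_gen]; rfl
@[simp] lemma i'_g6 : iota' (gen 6) = (T (-2) : L2) • gen 10 := by rw [iota', mkL_gen]; rfl
@[simp] lemma i'_g7 : iota' (gen 7) = (T (-1) : L2) • gen 11 := by rw [iota', mkL_gen]; rfl
@[simp] lemma i'_g8 : iota' (gen 8) = gen 12 := by rw [iota', mkL_gen]; rfl
@[simp] lemma i'_g9 : iota' (gen 9) = UL • gen 5 + UL • gen 7 := by rw [iota', mkL_gen]; rfl
@[simp] lemma i'_g10 : iota' (gen 10) = UL ^ 2 • gen 6 := by rw [iota', mkL_gen]; rfl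
@[simp] lemma i'_g11 : iota' (gen 11) = UL • gen 7 := by rw [iota', mkL_gen]; rfl
@[simp] lemma i'_g12 : iota' (gen 12) = gen 8 := by rw [iota', mkL_gen]; rfl

@[simp] lemma G_g0 : G (gen 0) = 0 := by rw [G, mkL_gen]; rfl
@[simp] lemma G_g1 : G (gen 1) = 0 := by rw [G, mkL_gen]; rfl
@[simp] lemma G_g2 : G (gen 2) = 0 := by rw [G, mkL_gen]; rfl
@[simp] lemma G_g3 : G (gen 3) = 0 := by rw [G, mkL_gen]; rfl
@[simp] lemma G_g4 : G (gen 4) = 0 := by rw [G, mkL_gen]; rfl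
@[simp] lemma G_g5 : G (gen 5) = 0 := by rw [G, mkL_gen]; rfl
@[simp] lemma G_g6 : G (gen 6) = (T (-2) : L2) • gen 3 := by rw [G, mkL_gen]; rfl
@[simp] lemma G_g7 : G (gen 7) = 0 := by rw [G, mkL_gen]; rfl
@[simp] lemma G_g8 : G (gen 8) = 0 := by rw [G, mkL_gen]; rfl
@[simp] lemma G_g9 : G (gen 9) = 0 := by rw [G, mkL_gen]; rfl
@[simp] lemma G_g10 : G (gen 10) = 0 := by rw [G, mkL_gen]; rfl
@[simp] lemma G_g11 : G (gen 11) = 0 := by rw [G, mkL_gen]; rfl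
@[simp] lemma G_g12 : G (gen 12) = 0 := by rw [G, mkL_gen]; rfl

lemma homog_single {n : ℕ} (Mv : Fin n → ℤ) (i : Fin n) (k r : ℤ) (h : Mv i - 2 * k = r) :
    HomogL Mv r ((T k : L2) • gen i) :=
  Submodule.subset_span ⟨i, k, h, rfl⟩

lemma homog_gen {n : ℕ} (Mv : Fin n → ℤ) (i : Fin n) (r : ℤ) (h : Mv i = r) :
    HomogL Mv r (gen i) :=
  Submodule.subset_span ⟨i, 0, by omega, by rw [T_zero_smul]⟩

lemma homog_T_smul {n : ℕ} (Mv : Fin n → ℤ) (r k : ℤ) (x : Fin n → L2)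
    (hx : HomogL Mv r x) : HomogL Mv (r - 2 * k) ((T k : L2) • x) := by
  induction hx using Submodule.span_induction with
  | mem v hv =>
      obtain ⟨i, k0, hk0, rfl⟩ := hv
      rw [T_smul_T]
      exact homog_single Mv i (k + k0) _ (by omega)
  | zero => rw [smul_zero]; exact Submodule.zero_mem _
  | add x y _ _ hx hy => rw [smul_add]; exact Submodule.add_mem _ hx hy
  | smul c x _ hx =>
      rw [smul_comm]
      exact Submodule.smul_mem _ c hx

lemma homog_map {n : ℕ} (Mv : Fin n → ℤ) (s : ℤ) (F : (Fin n → L2) →ₗ[L2] (Fin n → L2))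
    (hF : ∀ i, HomogL Mv (Mv i + s) (F (gen i))) :
    ∀ (r : ℤ) (x : Fin n → L2), HomogL Mv r x → HomogL Mv (r + s) (F x) := by
  intro r x hx
  induction hx using Submodule.span_induction with
  | mem v hv =>
      obtain ⟨i, k, hk, rfl⟩ := hv
      rw [map_smul]
      have := homog_T_smul Mv (Mv i + s) k _ (hF i)
      have he : Mv i + s - 2 * k = r + s := by omega
      rwa [he] at this
  | zero => rw [map_zero]; exact Submodule.zero_mem _
  | add x y _ _ hx hy => rw [map_add]; exact Submodule.add_mem _ hx hy
  | smul c x _ hx =>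
      rw [LinearMap.map_smul_of_tower]
      exact Submodule.smul_mem _ c hx

lemma below_single {n : ℕ} (Pv : Fin n → ℤ × ℤ) (st : ℤ × ℤ) (i : Fin n) (k : ℤ)
    (h1 : (Pv i).1 - k ≤ st.1) (h2 : (Pv i).2 - k ≤ st.2) :
    BelowL Pv st ((T k : L2) • gen i) :=
  Submodule.subset_span ⟨i, k, h1, h2, rfl⟩

lemma below_gen {n : ℕ} (Pv : Fin n → ℤ × ℤ) (st : ℤ × ℤ) (i : Fin n)
    (h1 : (Pv i).1 ≤ st.1) (h2 : (Pv i).2 ≤ st.2) :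
    BelowL Pv st (gen i) :=
  Submodule.subset_span ⟨i, 0, by omega, by omega, by rw [T_zero_smul]⟩

theorem stmt_14 :
    -- ι' is a chain map
    iota' ∘ₗ d = d ∘ₗ iota' ∧
    -- ι' preserves the homological grading M
    (∀ (r : ℤ) (x : Fin 13 → L2), HomogL M r x → HomogL M r (iota' x)) ∧
    -- ι' is skew-filtered
    (∀ i : Fin 13, BelowL P ((P i).2, (P i).1) (iota' (gen i))) ∧
    -- G is skew-filtered
    (∀ i : Fin 13, BelowL P ((P i).2, (P i).1) (G (gen i))) ∧
    -- G raises the homological grading by 1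
    (∀ (r : ℤ) (x : Fin 13 → L2), HomogL M r x → HomogL M (r + 1) (G x)) ∧
    -- ∂G + G∂ = ι + ι'
    d ∘ₗ G + G ∘ₗ d = iota + iota' := by
  refine ⟨?_, ?_, ?_, ?_, ?_, ?_⟩
  · -- ι' chain map
    apply (Pi.basisFun L2 (Fin 13)).ext
    intro i
    have hb : Pi.basisFun L2 (Fin 13) i = gen i := by simp [gen]
    rw [hb]
    fin_cases i <;>
      simp [map_add, map_smul, smul_add, add_comm]
  · -- ι' grading-preserving
    intro r x hx
    have := homog_map M 0 iota' ?_ r x hx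
    · rwa [add_zero] at this
    · intro i
      fin_cases i <;> simp <;>
        first
        | exact homog_single M _ _ _ (by decide)
        | exact homog_gen M _ _ (by decide)
        | exact Submodule.add_mem _ (homog_single M _ _ _ (by decide))
            (homog_single M _ _ _ (by decide))
  · -- ι' skew-filtered
    intro i
    fin_cases i <;> simp <;>
      first
      | exact below_single P _ _ _ (by decide) (by decide)
      | exact below_gen P _ _ (by decide) (by decide)
      | exact Submodule.add_mem _ (below_single P _ _ _ (by decide) (by decide))
          (below_single P _ _ _ (by decide) (by decide))
  · -- G skew-filtered
    intro i
    fin_cases i <;> simp <;>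
      first
      | exact Submodule.zero_mem _
      | exact below_single P _ _ _ (by decide) (by decide)
  · -- G raises grading by 1
    intro r x hx
    apply homog_map M 1 G ?_ r x hx
    intro i
    fin_cases i <;> simp <;>
      first
      | exact Submodule.zero_mem _
      | exact homog_single M _ _ _ (by decide)
  · -- homotopy identity
    apply (Pi.basisFun L2 (Fin 13)).ext
    intro i
    have hb : Pi.basisFun L2 (Fin 13) i = gen i := by simp [gen]
    rw [hb]
    fin_cases i <;>
      simp [map_add, map_smul, smul_add, add_self'] <;>
      rw [← add_assoc, add_self', zero_add]
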